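/- Duopoly equilibrium under weak interference (Theorem 5, case 1): Consider the two-AP linear market with cross-interference coefficients 0 ≤ a ≤ 1, 0 ≤ b ≤ 1, a + b < 2, and inverse demand u(x) = w − s·x, w, s > 0. Define p_1* = w[(a+s)(1−b) + 2(1−a)(1+s)] / [4(1+s)² − (s+a)(s+b)] and p_2* = w[(b+s)(1−a) + 2(1−b)(1+s)] / [4(1+s)² − (s+a)(s+b)]. Then (p_1*, p_2*) is the unique Nash equilibrium of the duopoly pricing game: p_1*·x_1^WE(p_1*, p_2*) ≥ p_1·x_1^WE(p_1, p_2*) for all p_1 ≥ 0, p_2*·x_2^WE(p_1*, p_2*) ≥ p_2·x_2^WE(p_1*, p_2) for all p_2 ≥ 0, and no other pair in [0,∞)² has both properties. Moreover the equilibrium flows are x_1* = [(w−p_1*)(1+s) − (w−p_2*)(a+s)] / [(1+s)² − (s+a)(s+b)] and x_2* = [(w−p_2*)(1+s) − (w−p_1*)(b+s)] / [(1+s)² − (s+a)(s+b)]. -/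

import Mathlib

/-- A flow vector `x ∈ [0,∞)²` is a Wardrop equilibrium of the two-AP linear market with
cross-interference coefficients `a, b`, inverse demand `u x = w - s x`, and prices
`p = (p₁, p₂)`. -/
def IsLinWE (a b w s : ℝ) (p x : ℝ × ℝ) : Prop :=
  0 ≤ x.1 ∧ 0 ≤ x.2 ∧
  (0 < x.1 → p.1 + (x.1 + a * x.2) = w - s * (x.1 + x.2)) ∧
  (x.1 = 0 → w - s * (x.1 + x.2) ≤ p.1 + (x.1 + a * x.2)) ∧
  (0 < x.2 → p.2 + (b * x.1 + x.2) = w - s * (x.1 + x.2)) ∧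
  (x.2 = 0 → w - s * (x.1 + x.2) ≤ p.2 + (b * x.1 + x.2))

section AuxLemmas

lemma linWE_unique {a b w s : ℝ} (ha0 : 0 ≤ a) (hb0 : 0 ≤ b) (hab : a + b < 2) (hs : 0 < s)
    {p x y : ℝ × ℝ} (hx : IsLinWE a b w s p x) (hy : IsLinWE a b w s p y) : x = y := by
  obtain ⟨hx1, hx2, hx3, hx4, hx5, hx6⟩ := hx
  obtain ⟨hy1, hy2, hy3, hy4, hy5, hy6⟩ := hy
  have k1 : 0 ≤ (p.1 + (x.1 + a * x.2) - (w - s * (x.1 + x.2))) * (y.1 - x.1) := by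
    rcases eq_or_lt_of_le hx1 with h | h
    · exact mul_nonneg (by linarith [hx4 h.symm]) (by linarith)
    · have := hx3 h; nlinarith [this]
  have k2 : 0 ≤ (p.2 + (b * x.1 + x.2) - (w - s * (x.1 + x.2))) * (y.2 - x.2) := by
    rcases eq_or_lt_of_le hx2 with h | h
    · exact mul_nonneg (by linarith [hx6 h.symm]) (by linarith)
    · have := hx5 h; nlinarith [this]
  have k3 : 0 ≤ (p.1 + (y.1 + a * y.2) - (w - s * (y.1 + y.2))) * (x.1 - y.1) := by
    rcases eq_or_lt_of_le hy1 with h | h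
    · exact mul_nonneg (by linarith [hy4 h.symm]) (by linarith)
    · have := hy3 h; nlinarith [this]
  have k4 : 0 ≤ (p.2 + (b * y.1 + y.2) - (w - s * (y.1 + y.2))) * (x.2 - y.2) := by
    rcases eq_or_lt_of_le hy2 with h | h
    · exact mul_nonneg (by linarith [hy6 h.symm]) (by linarith)
    · have := hy5 h; nlinarith [this]
  have key : (x.1 - y.1) ^ 2 + (x.2 - y.2) ^ 2 ≤ 0 := by
    nlinarith [k1, k2, k3, k4, sq_nonneg (x.1 - y.1 + x.2 - y.2),
      sq_nonneg (x.1 - y.1 - (x.2 - y.2)), hs, hab, ha0, hb0,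
      mul_nonneg (by linarith : (0:ℝ) ≤ a + b + 2*s) (sq_nonneg (x.1 - y.1 + x.2 - y.2))]
  have e1 : x.1 = y.1 := by nlinarith [sq_nonneg (x.1 - y.1), sq_nonneg (x.2 - y.2)]
  have e2 : x.2 = y.2 := by nlinarith [sq_nonneg (x.1 - y.1), sq_nonneg (x.2 - y.2)]
  exact Prod.ext e1 e2

lemma linWE_of_eqs {a b w s p1 p2 x1 x2 : ℝ} (hx1 : 0 ≤ x1) (hx2 : 0 ≤ x2)
    (e1 : (1 + s) * x1 + (a + s) * x2 = w - p1)
    (e2 : (b + s) * x1 + (1 + s) * x2 = w - p2) :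
    IsLinWE a b w s (p1, p2) (x1, x2) := by
  refine ⟨hx1, hx2, fun _ => ?_, fun _ => ?_, fun _ => ?_, fun _ => ?_⟩ <;>
    · simp only [Prod.fst, Prod.snd] at *
      nlinarith [e1, e2]

lemma isLinWE_swap {a b w s : ℝ} {p x : ℝ × ℝ} (h : IsLinWE a b w s p x) :
    IsLinWE b a w s (p.2, p.1) (x.2, x.1) := by
  obtain ⟨h1, h2, h3, h4, h5, h6⟩ := h
  exact ⟨h2, h1, fun hp => by have := h5 hp; simp only [Prod.fst, Prod.snd] at *; linarith,
    fun hp => by have := h6 hp; simp only [Prod.fst, Prod.snd] at *; linarith,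
    fun hp => by have := h3 hp; simp only [Prod.fst, Prod.snd] at *; linarith,
    fun hp => by have := h4 hp; simp only [Prod.fst, Prod.snd] at *; linarith⟩

lemma xWE_eq {a b w s : ℝ} (ha0 : 0 ≤ a) (hb0 : 0 ≤ b) (hab : a + b < 2) (hs : 0 < s)
    (xWE : ℝ × ℝ → ℝ × ℝ)
    (hxWE : ∀ p : ℝ × ℝ, 0 ≤ p.1 → 0 ≤ p.2 → IsLinWE a b w s p (xWE p))
    {p1 p2 x1 x2 : ℝ} (hp1 : 0 ≤ p1) (hp2 : 0 ≤ p2) (hx1 : 0 ≤ x1) (hx2 : 0 ≤ x2)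
    (e1 : (1 + s) * x1 + (a + s) * x2 = w - p1)
    (e2 : (b + s) * x1 + (1 + s) * x2 = w - p2) :
    xWE (p1, p2) = (x1, x2) :=
  linWE_unique ha0 hb0 hab hs (hxWE (p1, p2) hp1 hp2) (linWE_of_eqs hx1 hx2 e1 e2)

/-- best response inequality at the candidate equilibrium. -/
lemma br_ineq {a b w s : ℝ} (ha0 : 0 ≤ a) (hb0 : 0 ≤ b) (hab : a + b < 2) (hs : 0 < s)
    (xWE : ℝ × ℝ → ℝ × ℝ)
    (hxWE : ∀ p : ℝ × ℝ, 0 ≤ p.1 → 0 ≤ p.2 → IsLinWE a b w s p (xWE p))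
    {p1s p2s X1 : ℝ} (hp1s0 : 0 ≤ p1s) (hp2s0 : 0 ≤ p2s)
    (hfoc : 2 * (1 + s) * p1s = w * (1 - a) + (a + s) * p2s)
    (hX1 : (xWE (p1s, p2s)).1 = X1)
    (hDX1 : ((1 + s) ^ 2 - (s + a) * (s + b)) * X1 = (1 + s) * p1s)
    {p1 : ℝ} (hp1 : 0 ≤ p1) : p1 * (xWE (p1, p2s)).1 ≤ p1s * (xWE (p1s, p2s)).1 := by
  have hs1 : (0:ℝ) < 1 + s := by linarith
  have hD : 0 < (1 + s) ^ 2 - (s + a) * (s + b) := by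
    nlinarith [sq_nonneg (a - b), mul_pos (show (0:ℝ) < 2 - a - b by linarith)
      (show (0:ℝ) < 2 + 4 * s + a + b by linarith)]
  set D := (1 + s) ^ 2 - (s + a) * (s + b) with hDdef
  rw [hX1]
  have hX1nn : 0 ≤ X1 := by nlinarith [mul_nonneg hs1.le hp1s0]
  obtain ⟨h1, h2, h3, h4, h5, h6⟩ := hxWE (p1, p2s) hp1 hp2s0
  set x := xWE (p1, p2s) with hxdef
  rcases eq_or_lt_of_le h1 with hz | hpos
  · rw [← hz]; ring_nf; positivity
  · have E1 : (1 + s) * x.1 + (a + s) * x.2 = w - p1 := by have := h3 hpos; linarith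
    by_contra hc
    push_neg at hc
    have hmul : D * (p1s * X1) < D * (p1 * x.1) := by
      exact mul_lt_mul_of_pos_left hc hD
    rcases eq_or_lt_of_le h2 with hz2 | hpos2
    · -- corner: x.2 = 0
      have hx2z : x.2 = 0 := hz2.symm
      have E2 : w - p2s ≤ (b + s) * x.1 := by
        have := h6 hx2z; rw [hx2z] at this; simp only [Prod.snd] at this; linarith
      have hE1' : (1 + s) * x.1 = w - p1 := by rw [hx2z] at E1; linarith
      -- D * x.1 ≤ 2(1+s)p1s - (1+s)p1
      have hub : D * x.1 ≤ 2 * (1 + s) * p1s - (1 + s) * p1 := by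
        nlinarith [mul_nonneg (show (0:ℝ) ≤ s + a by linarith) (show 0 ≤ (s + b) * x.1 - (w - p2s) by linarith)]
      nlinarith [mul_le_mul_of_nonneg_left hub hp1, sq_nonneg (p1 - p1s), hDX1]
    · have E2 : (b + s) * x.1 + (1 + s) * x.2 = w - p2s := by have := h5 hpos2; linarith
      have hval : D * x.1 = (w - p1) * (1 + s) - (w - p2s) * (a + s) := by
        linear_combination (1 + s) * E1 - (a + s) * E2
      nlinarith [sq_nonneg (p1 - p1s), hDX1, hval, hmul]

/-- First-order condition at an interior Nash equilibrium. -/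
lemma foc1 {a b w s : ℝ} (ha0 : 0 ≤ a) (ha1 : a ≤ 1) (hb0 : 0 ≤ b) (hab : a + b < 2)
    (hw : 0 < w) (hs : 0 < s)
    (xWE : ℝ × ℝ → ℝ × ℝ)
    (hxWE : ∀ p : ℝ × ℝ, 0 ≤ p.1 → 0 ≤ p.2 → IsLinWE a b w s p (xWE p))
    {q1 q2 : ℝ} (hq1 : 0 ≤ q1) (hq2 : 0 ≤ q2)
    (hy1 : 0 < (xWE (q1, q2)).1) (hy2 : 0 < (xWE (q1, q2)).2)
    (hNE1 : ∀ p1 : ℝ, 0 ≤ p1 → p1 * (xWE (p1, q2)).1 ≤ q1 * (xWE (q1, q2)).1) :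
    2 * (1 + s) * q1 = w * (1 - a) + (a + s) * q2 := by
  have hs1 : (0:ℝ) < 1 + s := by linarith
  have hbs : (0:ℝ) < b + s := by linarith
  have has : (0:ℝ) < a + s := by linarith
  have hD : 0 < (1 + s) ^ 2 - (s + a) * (s + b) := by
    nlinarith [mul_pos (show (0:ℝ) < 2 - a - b by linarith)
      (show (0:ℝ) < 2 + 4 * s + a + b by linarith), sq_nonneg (a - b)]
  set D := (1 + s) ^ 2 - (s + a) * (s + b) with hDdef
  obtain ⟨h1, h2, h3, h4, h5, h6⟩ := hxWE (q1, q2) hq1 hq2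
  set y := xWE (q1, q2) with hydef
  have E1 : (1 + s) * y.1 + (a + s) * y.2 = w - q1 := by have := h3 hy1; linarith
  have E2 : (b + s) * y.1 + (1 + s) * y.2 = w - q2 := by have := h5 hy2; linarith
  have hPhiq : D * y.1 = (w - q1) * (1 + s) - (w - q2) * (a + s) := by
    linear_combination (1 + s) * E1 - (a + s) * E2
  have hPsiq : D * y.2 = (w - q2) * (1 + s) - (w - q1) * (b + s) := by
    linear_combination (1 + s) * E2 - (b + s) * E1
  set A := w * (1 - a) + (a + s) * q2 with hAdef
  have hA0 : 0 ≤ A := by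
    have : 0 ≤ w * (1 - a) := mul_nonneg hw.le (by linarith)
    nlinarith [mul_nonneg has.le hq2]
  set v := A / (2 * (1 + s)) with hvdef
  have hvA : 2 * (1 + s) * v = A := by rw [hvdef]; field_simp
  have hv0 : 0 ≤ v := div_nonneg hA0 (by linarith)
  -- note: D*y.1 = A - (1+s)*q1
  have hPhiq' : D * y.1 = A - (1 + s) * q1 := by rw [hPhiq]; ring
  by_contra hne
  have hne' : q1 ≠ v := by
    intro h; apply hne; rw [h, hvA]
  rcases lt_or_gt_of_ne hne' with hlt | hgt
  · -- q1 < v : deviate upward to v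
    have hv1 : 0 < v := lt_of_le_of_lt hq1 hlt
    set N1 := (w - v) * (1 + s) - (w - q2) * (a + s) with hN1def
    set N2 := (w - q2) * (1 + s) - (w - v) * (b + s) with hN2def
    have hN1A : N1 = A - (1 + s) * v := by rw [hN1def]; ring
    have hN2 : 0 ≤ N2 := by
      have : N2 = D * y.2 + (v - q1) * (b + s) := by rw [hN2def, hPsiq]; ring
      nlinarith [mul_pos hD hy2, mul_nonneg (by linarith : (0:ℝ) ≤ v - q1) hbs.le]
    have hkey : v * N1 = q1 * (D * y.1) + (1 + s) * (v - q1) ^ 2 := by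
      rw [hN1A, hPhiq']; linear_combination (q1 - v) * hvA
    have hsqpos : 0 < (1 + s) * (v - q1) ^ 2 :=
      mul_pos hs1 (pow_two_pos_of_ne_zero (ne_of_gt (by linarith : (0:ℝ) < v - q1)))
    have hvN1pos : 0 < v * N1 := by
      have := mul_nonneg hq1 (mul_nonneg hD.le h1)
      linarith [hkey]
    have hN1 : 0 ≤ N1 := by
      rcases le_or_gt 0 N1 with h | h
      · exact h
      · linarith [mul_neg_of_pos_of_neg hv1 h]
    -- the WE at (v, q2)
    have hWE : xWE (v, q2) = (N1 / D, N2 / D) := by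
      apply xWE_eq ha0 hb0 hab hs xWE hxWE hv0 hq2 (div_nonneg hN1 hD.le) (div_nonneg hN2 hD.le)
      · field_simp [hD.ne']
        rw [hN1def, hN2def, hDdef]; ring
      · field_simp [hD.ne']
        rw [hN1def, hN2def, hDdef]; ring
    have := hNE1 v hv0
    rw [hWE] at this
    simp only [Prod.fst] at this
    -- this : v * (N1 / D) ≤ q1 * y.1
    have hvN : v * N1 ≤ q1 * (D * y.1) := by
      have h' : v * (N1 / D) * D ≤ q1 * y.1 * D := mul_le_mul_of_nonneg_right this hD.le
      calc v * N1 = v * (N1 / D) * D := by field_simp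
        _ ≤ q1 * y.1 * D := h'
        _ = q1 * (D * y.1) := by ring
    linarith [hkey, hvN, hsqpos]
  · -- v < q1 : deviate downward to pd = max v t where t is the Ψ = 0 point
    set t := w - (w - q2) * (1 + s) / (b + s) with htdef
    have ht : (w - t) * (b + s) = (w - q2) * (1 + s) := by rw [htdef]; field_simp; ring
    have htq1 : t < q1 := by
      have h2' : (w - q1) * (b + s) < (w - t) * (b + s) := by
        rw [ht]; linarith [mul_pos hD hy2, hPsiq]
      have := lt_of_mul_lt_mul_right h2' hbs.le
      linarith
    obtain ⟨pd, hpddef⟩ : ∃ pd : ℝ, pd = max v t := ⟨_, rfl⟩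
    have hpd0 : 0 ≤ pd := hpddef ▸ le_trans hv0 (le_max_left _ _)
    have hpdq1 : pd < q1 := hpddef ▸ max_lt hgt htq1
    have hpdv : v ≤ pd := hpddef ▸ le_max_left _ _
    have hpdt : t ≤ pd := hpddef ▸ le_max_right _ _
    clear hpddef
    obtain ⟨N1, hN1def⟩ : ∃ N1 : ℝ, N1 = (w - pd) * (1 + s) - (w - q2) * (a + s) := ⟨_, rfl⟩
    obtain ⟨N2, hN2def⟩ : ∃ N2 : ℝ, N2 = (w - q2) * (1 + s) - (w - pd) * (b + s) := ⟨_, rfl⟩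
    have hN1A : N1 = A - (1 + s) * pd := by rw [hN1def]; ring
    have hN2 : 0 ≤ N2 := by
      have h' : N2 = (pd - t) * (b + s) := by rw [hN2def, ← ht]; ring
      rw [h']; exact mul_nonneg (by linarith) hbs.le
    have hN1 : 0 ≤ N1 := by
      have h' : N1 = D * y.1 + (q1 - pd) * (1 + s) := by rw [hN1A, hPhiq']; ring
      rw [h']
      have := mul_nonneg hD.le h1
      have := mul_pos (by linarith : (0:ℝ) < q1 - pd) hs1
      linarith
    have hWE : xWE (pd, q2) = (N1 / D, N2 / D) := by
      apply xWE_eq ha0 hb0 hab hs xWE hxWE hpd0 hq2 (div_nonneg hN1 hD.le) (div_nonneg hN2 hD.le)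
      · field_simp [hD.ne']
        rw [hN1def, hN2def, hDdef]; ring
      · field_simp [hD.ne']
        rw [hN1def, hN2def, hDdef]; ring
    have := hNE1 pd hpd0
    rw [hWE] at this
    simp only [Prod.fst] at this
    have hvN : pd * N1 ≤ q1 * (D * y.1) := by
      have h' : pd * (N1 / D) * D ≤ q1 * y.1 * D := mul_le_mul_of_nonneg_right this hD.le
      calc pd * N1 = pd * (N1 / D) * D := by field_simp
        _ ≤ q1 * y.1 * D := h'
        _ = q1 * (D * y.1) := by ring
    -- but pd * N1 - q1 * (D*y.1) = (1+s)*(q1 - pd)*(q1 + pd - 2v) > 0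
    have hkey : pd * N1 - q1 * (D * y.1) = (1 + s) * (q1 - pd) * (q1 + pd - 2 * v) := by
      rw [hN1A, hPhiq']; linear_combination (q1 - pd) * hvA
    linarith [hvN, hkey, mul_pos (mul_pos hs1 (by linarith : (0:ℝ) < q1 - pd))
      (by linarith : (0:ℝ) < q1 + pd - 2 * v)]

/-- At a Nash equilibrium, SP1's flow is positive. -/
lemma pos_flow1 {a b w s : ℝ} (ha0 : 0 ≤ a) (ha1 : a ≤ 1) (hb0 : 0 ≤ b) (hb1 : b ≤ 1)
    (hab : a + b < 2) (hw : 0 < w) (hs : 0 < s)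
    (xWE : ℝ × ℝ → ℝ × ℝ)
    (hxWE : ∀ p : ℝ × ℝ, 0 ≤ p.1 → 0 ≤ p.2 → IsLinWE a b w s p (xWE p))
    {q1 q2 : ℝ} (hq1 : 0 ≤ q1) (hq2 : 0 ≤ q2)
    (hNE1 : ∀ p1 : ℝ, 0 ≤ p1 → p1 * (xWE (p1, q2)).1 ≤ q1 * (xWE (q1, q2)).1)
    (hNE2 : ∀ p2 : ℝ, 0 ≤ p2 → p2 * (xWE (q1, p2)).2 ≤ q2 * (xWE (q1, q2)).2) :
    0 < (xWE (q1, q2)).1 := by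
  have hs1 : (0:ℝ) < 1 + s := by linarith
  obtain ⟨h1, h2, h3, h4, h5, h6⟩ := hxWE (q1, q2) hq1 hq2
  set y := xWE (q1, q2) with hydef
  rcases eq_or_lt_of_le h1 with hz | hpos
  swap
  · exact hpos
  exfalso
  have hy1 : y.1 = 0 := hz.symm
  rcases lt_or_eq_of_le ha1 with halt | haeq
  · -- a < 1 : SP1 deviates to w(1-a)/(2(1+s))
    set p1 := w * (1 - a) / (2 * (1 + s)) with hp1def
    have hp1pos : 0 < p1 := by
      apply div_pos (mul_pos hw (by linarith)) (by linarith)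
    have hp1e : p1 * (2 * (1 + s)) = w * (1 - a) := by rw [hp1def]; field_simp
    obtain ⟨g1, g2, g3, g4, g5, g6⟩ := hxWE (p1, q2) hp1pos.le hq2
    set x := xWE (p1, q2) with hxdef
    have hx1pos : 0 < x.1 := by
      rcases eq_or_lt_of_le g1 with gz | gpos
      swap
      · exact gpos
      exfalso
      have hx1z : x.1 = 0 := gz.symm
      have hcond := g4 hx1z
      rw [hx1z] at hcond
      simp only [Prod.fst] at hcond
      -- x.2 ≤ w/(1+s), i.e. (1+s)*x.2 ≤ w
      have hx2w : (1 + s) * x.2 ≤ w := by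
        rcases eq_or_lt_of_le g2 with gz2 | gpos2
        · rw [← gz2]; linarith
        · have := g5 gpos2
          rw [hx1z] at this
          simp only [Prod.snd] at this
          linarith
      -- hcond : w - s*(0 + x.2) ≤ p1 + (0 + a*x.2)
      nlinarith [hcond, hx2w, hp1e, mul_nonneg (by linarith : (0:ℝ) ≤ 1 - a) (mul_nonneg hs.le g2)]
    have := hNE1 p1 hp1pos.le
    rw [hy1, mul_zero] at this
    linarith [mul_pos hp1pos hx1pos]
  · -- a = 1, hence b < 1
    have hblt : b < 1 := by linarith [haeq ▸ hab]
    -- Step 1: q2 > 0 and y.2 > 0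
    set p2 := w * (1 - b) / (2 * (1 + s)) with hp2def
    have hp2pos : 0 < p2 := div_pos (mul_pos hw (by linarith)) (by linarith)
    have hp2e : p2 * (2 * (1 + s)) = w * (1 - b) := by rw [hp2def]; field_simp
    obtain ⟨g1, g2, g3, g4, g5, g6⟩ := hxWE (q1, p2) hq1 hp2pos.le
    set x := xWE (q1, p2) with hxdef
    have hx2pos : 0 < x.2 := by
      rcases eq_or_lt_of_le g2 with gz | gpos
      swap
      · exact gpos
      exfalso
      have hx2z : x.2 = 0 := gz.symm
      have hcond := g6 hx2z
      rw [hx2z] at hcond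
      simp only [Prod.snd] at hcond
      have hx1w : (1 + s) * x.1 ≤ w := by
        rcases eq_or_lt_of_le g1 with gz1 | gpos1
        · rw [← gz1]; linarith
        · have := g3 gpos1
          rw [hx2z] at this
          simp only [Prod.fst] at this
          nlinarith [mul_nonneg ha0 g2]
      nlinarith [hcond, hx1w, hp2e, mul_nonneg (by linarith : (0:ℝ) ≤ 1 - b) (mul_nonneg hs.le g1)]
    have hq2y2 : 0 < q2 * y.2 := by
      have := hNE2 p2 hp2pos.le
      linarith [mul_pos hp2pos hx2pos]
    have hq2pos : 0 < q2 := by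
      rcases eq_or_lt_of_le hq2 with hzz | h
      · rw [← hzz] at hq2y2; simp at hq2y2
      · exact h
    have hy2pos : 0 < y.2 := by
      rcases eq_or_lt_of_le h2 with hzz | h
      · rw [← hzz, mul_zero] at hq2y2; simp at hq2y2
      · exact h
    -- Step 2: (1+s) y.2 = w - q2, so q2 < w
    have hE2 : (1 + s) * y.2 = w - q2 := by
      have := h5 hy2pos
      rw [hy1] at this
      simp only [Prod.snd] at this
      linarith
    have hq2w : q2 < w := by nlinarith [mul_pos hs1 hy2pos]
    -- Step 3: SP1 deviates to q2/2
    have hp1'pos : 0 < q2 / 2 := by linarith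
    obtain ⟨f1, f2, f3, f4, f5, f6⟩ := hxWE (q2 / 2, q2) hp1'pos.le hq2
    set z := xWE (q2 / 2, q2) with hzdef
    have hz1pos : 0 < z.1 := by
      rcases eq_or_lt_of_le f1 with fz | fpos
      swap
      · exact fpos
      exfalso
      have hz1z : z.1 = 0 := fz.symm
      have hcond := f4 hz1z
      rw [hz1z] at hcond
      simp only [Prod.fst] at hcond
      -- hcond : w - s*(0 + z.2) ≤ q2/2 + (0 + a*z.2), with a = 1
      rcases eq_or_lt_of_le f2 with fz2 | fpos2
      · rw [← fz2] at hcond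
        -- w ≤ q2/2 < w
        nlinarith [hcond]
      · have hE2' := f5 fpos2
        rw [hz1z] at hE2'
        simp only [Prod.fst, Prod.snd] at hE2'
        -- (1+s) z.2 = w - q2 ; hcond gives w - s z.2 ≤ q2/2 + z.2 (a=1)
        rw [haeq] at hcond
        nlinarith [hcond, hE2']
    have := hNE1 (q2 / 2) hp1'pos.le
    rw [hy1, mul_zero] at this
    linarith [mul_pos hp1'pos hz1pos]

end AuxLemmas

/-- **Duopoly equilibrium under weak interference (Theorem 5, case 1).**
For `0 ≤ a ≤ 1`, `0 ≤ b ≤ 1`, `a + b < 2`, the pair `(p₁*, p₂*)` given by the stated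
formulas is the unique Nash equilibrium of the duopoly pricing game, and the equilibrium
flows are given by the stated formulas. -/
theorem duopoly_equilibrium_weak_interference
    (a b w s : ℝ) (ha0 : 0 ≤ a) (ha1 : a ≤ 1) (hb0 : 0 ≤ b) (hb1 : b ≤ 1)
    (hab : a + b < 2) (hw : 0 < w) (hs : 0 < s)
    (xWE : ℝ × ℝ → ℝ × ℝ)
    (hxWE : ∀ p : ℝ × ℝ, 0 ≤ p.1 → 0 ≤ p.2 → IsLinWE a b w s p (xWE p))
    (p1s p2s : ℝ)
    (hp1s : p1s = w * ((a + s) * (1 - b) + 2 * (1 - a) * (1 + s)) /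
                    (4 * (1 + s) ^ 2 - (s + a) * (s + b)))
    (hp2s : p2s = w * ((b + s) * (1 - a) + 2 * (1 - b) * (1 + s)) /
                    (4 * (1 + s) ^ 2 - (s + a) * (s + b))) :
    (0 ≤ p1s ∧ 0 ≤ p2s) ∧
    (∀ p1 : ℝ, 0 ≤ p1 → p1 * (xWE (p1, p2s)).1 ≤ p1s * (xWE (p1s, p2s)).1) ∧
    (∀ p2 : ℝ, 0 ≤ p2 → p2 * (xWE (p1s, p2)).2 ≤ p2s * (xWE (p1s, p2s)).2) ∧
    (∀ q : ℝ × ℝ, 0 ≤ q.1 → 0 ≤ q.2 →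
      (∀ p1 : ℝ, 0 ≤ p1 → p1 * (xWE (p1, q.2)).1 ≤ q.1 * (xWE q).1) →
      (∀ p2 : ℝ, 0 ≤ p2 → p2 * (xWE (q.1, p2)).2 ≤ q.2 * (xWE q).2) →
      q = (p1s, p2s)) ∧
    xWE (p1s, p2s) =
      (((w - p1s) * (1 + s) - (w - p2s) * (a + s)) /
          ((1 + s) ^ 2 - (s + a) * (s + b)),
       ((w - p2s) * (1 + s) - (w - p1s) * (b + s)) /
          ((1 + s) ^ 2 - (s + a) * (s + b))) := by
  have hs1 : (0:ℝ) < 1 + s := by linarith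
  have hba : b + a < 2 := by linarith
  have hD : 0 < (1 + s) ^ 2 - (s + a) * (s + b) := by
    nlinarith [mul_pos (show (0:ℝ) < 2 - a - b by linarith)
      (show (0:ℝ) < 2 + 4 * s + a + b by linarith), sq_nonneg (a - b)]
  have hE : 0 < 4 * (1 + s) ^ 2 - (s + a) * (s + b) := by nlinarith [sq_nonneg (1 + s)]
  have hp1spos : 0 < p1s := by
    rw [hp1s]
    apply div_pos _ hE
    apply mul_pos hw
    nlinarith [mul_nonneg ha0 (show (0:ℝ) ≤ 1 - b by linarith),
      mul_nonneg (show (0:ℝ) ≤ 1 - a by linarith) hs.le,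
      mul_pos hs (show (0:ℝ) < 2 - a - b by linarith)]
  have hp2spos : 0 < p2s := by
    rw [hp2s]
    apply div_pos _ hE
    apply mul_pos hw
    nlinarith [mul_nonneg hb0 (show (0:ℝ) ≤ 1 - a by linarith),
      mul_nonneg (show (0:ℝ) ≤ 1 - b by linarith) hs.le,
      mul_pos hs (show (0:ℝ) < 2 - a - b by linarith)]
  have hfoc1 : 2 * (1 + s) * p1s = w * (1 - a) + (a + s) * p2s := by
    have e1 := hp1s; have e2 := hp2s
    rw [eq_div_iff hE.ne'] at e1 e2
    apply mul_left_cancel₀ hE.ne'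
    linear_combination 2 * (1 + s) * e1 - (a + s) * e2
  have hfoc2 : 2 * (1 + s) * p2s = w * (1 - b) + (b + s) * p1s := by
    have e1 := hp1s; have e2 := hp2s
    rw [eq_div_iff hE.ne'] at e1 e2
    apply mul_left_cancel₀ hE.ne'
    linear_combination 2 * (1 + s) * e2 - (b + s) * e1
  have hnum1 : (w - p1s) * (1 + s) - (w - p2s) * (a + s) = (1 + s) * p1s := by
    linear_combination -hfoc1
  have hnum2 : (w - p2s) * (1 + s) - (w - p1s) * (b + s) = (1 + s) * p2s := by
    linear_combination -hfoc2
  have hX1pos : 0 < ((w - p1s) * (1 + s) - (w - p2s) * (a + s)) /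
      ((1 + s) ^ 2 - (s + a) * (s + b)) := by
    apply div_pos _ hD
    rw [hnum1]; exact mul_pos hs1 hp1spos
  have hX2pos : 0 < ((w - p2s) * (1 + s) - (w - p1s) * (b + s)) /
      ((1 + s) ^ 2 - (s + a) * (s + b)) := by
    apply div_pos _ hD
    rw [hnum2]; exact mul_pos hs1 hp2spos
  have hDX1 : ((1 + s) ^ 2 - (s + a) * (s + b)) *
      (((w - p1s) * (1 + s) - (w - p2s) * (a + s)) / ((1 + s) ^ 2 - (s + a) * (s + b)))
      = (1 + s) * p1s := by
    rw [mul_div_cancel₀ _ hD.ne', hnum1]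
  have hDX2' : ((1 + s) ^ 2 - (s + b) * (s + a)) *
      (((w - p2s) * (1 + s) - (w - p1s) * (b + s)) / ((1 + s) ^ 2 - (s + a) * (s + b)))
      = (1 + s) * p2s := by
    rw [show (1 + s) ^ 2 - (s + b) * (s + a) = (1 + s) ^ 2 - (s + a) * (s + b) by ring,
      mul_div_cancel₀ _ hD.ne', hnum2]
  have hWEstar : xWE (p1s, p2s) =
      (((w - p1s) * (1 + s) - (w - p2s) * (a + s)) / ((1 + s) ^ 2 - (s + a) * (s + b)),
       ((w - p2s) * (1 + s) - (w - p1s) * (b + s)) / ((1 + s) ^ 2 - (s + a) * (s + b))) := by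
    apply xWE_eq ha0 hb0 hab hs xWE hxWE hp1spos.le hp2spos.le hX1pos.le hX2pos.le
    · field_simp
      ring
    · field_simp
      ring
  refine ⟨⟨hp1spos.le, hp2spos.le⟩, ?_, ?_, ?_, hWEstar⟩
  · intro p1 hp1
    exact br_ineq ha0 hb0 hab hs xWE hxWE hp1spos.le hp2spos.le hfoc1
      (by rw [hWEstar]) hDX1 hp1
  · intro p2 hp2
    exact br_ineq hb0 ha0 hba hs
      (fun p => ((xWE (p.2, p.1)).2, (xWE (p.2, p.1)).1))
      (fun p hpa hpb => isLinWE_swap (hxWE (p.2, p.1) hpb hpa))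
      hp2spos.le hp1spos.le hfoc2
      (by simp only []; rw [hWEstar]) hDX2' hp2
  · intro q hq1 hq2 hNE1 hNE2
    have hy1 : 0 < (xWE (q.1, q.2)).1 :=
      pos_flow1 ha0 ha1 hb0 hb1 hab hw hs xWE hxWE hq1 hq2 hNE1 hNE2
    have hy2 : 0 < (xWE (q.1, q.2)).2 :=
      pos_flow1 hb0 hb1 ha0 ha1 hba hw hs
        (fun p => ((xWE (p.2, p.1)).2, (xWE (p.2, p.1)).1))
        (fun p hpa hpb => isLinWE_swap (hxWE (p.2, p.1) hpb hpa))
        hq2 hq1 hNE2 hNE1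
    have hfq1 : 2 * (1 + s) * q.1 = w * (1 - a) + (a + s) * q.2 :=
      foc1 ha0 ha1 hb0 hab hw hs xWE hxWE hq1 hq2 hy1 hy2 hNE1
    have hfq2 : 2 * (1 + s) * q.2 = w * (1 - b) + (b + s) * q.1 :=
      foc1 hb0 hb1 ha0 hba hw hs
        (fun p => ((xWE (p.2, p.1)).2, (xWE (p.2, p.1)).1))
        (fun p hpa hpb => isLinWE_swap (hxWE (p.2, p.1) hpb hpa))
        hq2 hq1 hy2 hy1 hNE2
    have hq1e : q.1 = p1s := by
      have hz : (4 * (1 + s) ^ 2 - (s + a) * (s + b)) * (q.1 - p1s) = 0 := by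
        linear_combination 2 * (1 + s) * hfq1 - 2 * (1 + s) * hfoc1 +
          (a + s) * hfq2 - (a + s) * hfoc2
      rcases mul_eq_zero.mp hz with h | h
      · exact absurd h hE.ne'
      · linarith [sub_eq_zero.mp h]
    have hq2e : q.2 = p2s := by
      have hz : (2 * (1 + s)) * (q.2 - p2s) = 0 := by
        linear_combination hfq2 - hfoc2 + (b + s) * hq1e
      rcases mul_eq_zero.mp hz with h | h
      · linarith
      · linarith [sub_eq_zero.mp h]
    exact Prod.ext hq1e hq2e
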